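/- Let C ⊆ 𝔽_p^{2n} be a self-dual code with respect to the form g = [[0,I],[I,0]] (i.e. C = C^⊥ where C^⊥ = {c' : c g c'^T = 0 for all c ∈ C}). Then the Construction A lattice Λ_C is self-dual with respect to the Lorentzian form ⟨(x,y),(x',y')⟩ = x·y' + y·x': Λ_C = Λ_C^*, where Λ_C^* = { w ∈ ℝ^{2n} : ⟨v,w⟩ ∈ ℤ for all v ∈ Λ_C }. -/

import Mathlib

open Matrix

/-- The Lorentzian pairing ⟨(x,y),(x',y')⟩ = x·y' + y·x' on ℝ^n × ℝ^n. -/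
def lorentzPair {n : ℕ} (v w : (Fin n → ℝ) × (Fin n → ℝ)) : ℝ :=
  ∑ i, (v.1 i * w.2 i + v.2 i * w.1 i)

theorem constructionA_self_dual (p n : ℕ) [Fact p.Prime]
    (C : Set ((Fin n → ZMod p) × (Fin n → ZMod p)))
    -- C is self-dual: C = C^⊥ with respect to g = [[0,I],[I,0]]
    (hC : C = {c' | ∀ c ∈ C, (∑ i, (c.1 i * c'.2 i + c.2 i * c'.1 i)) = 0}) :
    let Λ : Set ((Fin n → ℝ) × (Fin n → ℝ)) :=
      {v | ∃ c ∈ C, ∃ k₁ k₂ : Fin n → ℤ,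
        v = ((fun i => (((c.1 i).val : ℝ) + p * k₁ i) / Real.sqrt p),
             (fun i => (((c.2 i).val : ℝ) + p * k₂ i) / Real.sqrt p))}
    Λ = {w | ∀ v ∈ Λ, ∃ z : ℤ, lorentzPair v w = z} := by
  intro Λ
  haveI : NeZero p := ⟨(Fact.out : p.Prime).ne_zero⟩
  have hp : (0:ℝ) < p := by exact_mod_cast (Fact.out : p.Prime).pos
  have hpz : (p:ℝ) ≠ 0 := hp.ne'
  have hsq : Real.sqrt p * Real.sqrt p = p := Real.mul_self_sqrt hp.le
  have hsp : (0:ℝ) < Real.sqrt p := Real.sqrt_pos.mpr hp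
  have key : ∀ (a b a' b' : Fin n → ℤ),
      lorentzPair ((fun i => (a i : ℝ)/Real.sqrt p), (fun i => (b i : ℝ)/Real.sqrt p))
        ((fun i => (a' i : ℝ)/Real.sqrt p), (fun i => (b' i : ℝ)/Real.sqrt p))
      = ((∑ i, (a i * b' i + b i * a' i) : ℤ) : ℝ) / p := by
    intro a b a' b'
    unfold lorentzPair
    push_cast
    rw [Finset.sum_div]
    apply Finset.sum_congr rfl
    intro i _
    rw [div_mul_div_comm, div_mul_div_comm, hsq, ← add_div]
  have key2 : ∀ (a b a' b' : Fin n → ℕ) (k₁ k₂ l₁ l₂ : Fin n → ℤ),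
      lorentzPair ((fun i => ((a i : ℝ) + p * k₁ i)/Real.sqrt p),
                   (fun i => ((b i : ℝ) + p * k₂ i)/Real.sqrt p))
        ((fun i => ((a' i : ℝ) + p * l₁ i)/Real.sqrt p),
         (fun i => ((b' i : ℝ) + p * l₂ i)/Real.sqrt p))
      = ((∑ i, (((a i : ℤ) + p * k₁ i) * ((b' i : ℤ) + p * l₂ i)
          + ((b i : ℤ) + p * k₂ i) * ((a' i : ℤ) + p * l₁ i)) : ℤ) : ℝ) / p := by
    intro a b a' b' k₁ k₂ l₁ l₂
    have := key (fun i => (a i : ℤ) + p * k₁ i) (fun i => (b i : ℤ) + p * k₂ i)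
      (fun i => (a' i : ℤ) + p * l₁ i) (fun i => (b' i : ℤ) + p * l₂ i)
    rw [← this]
    congr 1 <;>
      exact Prod.ext (funext fun i => by push_cast; ring) (funext fun i => by push_cast; ring)
  apply Set.eq_of_subset_of_subset
  · rintro w ⟨c', hc', l₁, l₂, rfl⟩ v ⟨c, hc, k₁, k₂, rfl⟩
    rw [hC] at hc'
    rw [key2 (fun i => (c.1 i).val) (fun i => (c.2 i).val)
      (fun i => (c'.1 i).val) (fun i => (c'.2 i).val) k₁ k₂ l₁ l₂]
    have hdvd : (p:ℤ) ∣ ∑ i, ((((c.1 i).val : ℤ) + p * k₁ i) * (((c'.2 i).val : ℤ) + p * l₂ i)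
        + (((c.2 i).val : ℤ) + p * k₂ i) * (((c'.1 i).val : ℤ) + p * l₁ i)) := by
      have h0 : ((∑ i, ((((c.1 i).val : ℤ) + p * k₁ i) * (((c'.2 i).val : ℤ) + p * l₂ i)
          + (((c.2 i).val : ℤ) + p * k₂ i) * (((c'.1 i).val : ℤ) + p * l₁ i)) : ℤ)
          : ZMod p) = 0 := by
        push_cast
        simp only [ZMod.natCast_val, ZMod.cast_id, ZMod.natCast_self, zero_mul, mul_zero,
          add_zero, zero_add]
        exact hc' c hc
      exact (ZMod.intCast_zmod_eq_zero_iff_dvd _ _).mp h0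
    obtain ⟨m, hm⟩ := hdvd
    refine ⟨m, ?_⟩
    rw [hm]
    push_cast
    field_simp
  · intro w hw
    have h0C : (0 : (Fin n → ZMod p) × (Fin n → ZMod p)) ∈ C := by
      rw [hC]; intro c hc; simp
    have hV1 : ∀ j : Fin n,
        ((fun i => if i = j then Real.sqrt p else 0), (0 : Fin n → ℝ)) ∈ Λ := by
      intro j
      refine ⟨0, h0C, (fun i => if i = j then 1 else 0), 0, ?_⟩
      refine Prod.ext (funext fun i => ?_) (funext fun i => ?_)
      · show (if i = j then Real.sqrt p else 0) = _
        by_cases h : i = j <;> simp [h, Real.div_sqrt]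
      · show (0:ℝ) = _
        simp
    have hV2 : ∀ j : Fin n,
        ((0 : Fin n → ℝ), (fun i => if i = j then Real.sqrt p else 0)) ∈ Λ := by
      intro j
      refine ⟨0, h0C, 0, (fun i => if i = j then 1 else 0), ?_⟩
      refine Prod.ext (funext fun i => ?_) (funext fun i => ?_)
      · show (0:ℝ) = _
        simp
      · show (if i = j then Real.sqrt p else 0) = _
        by_cases h : i = j <;> simp [h, Real.div_sqrt]
    have h1 : ∀ j, ∃ z : ℤ, Real.sqrt p * w.2 j = z := by
      intro j
      obtain ⟨z, hz⟩ := hw _ (hV1 j)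
      refine ⟨z, ?_⟩
      rw [← hz]
      unfold lorentzPair
      simp [ite_mul, Finset.sum_ite_eq']
    have h2 : ∀ j, ∃ z : ℤ, Real.sqrt p * w.1 j = z := by
      intro j
      obtain ⟨z, hz⟩ := hw _ (hV2 j)
      refine ⟨z, ?_⟩
      rw [← hz]
      unfold lorentzPair
      simp [ite_mul, Finset.sum_ite_eq']
    choose z₂ hz₂ using h1
    choose z₁ hz₁ using h2
    have hw1 : ∀ i, w.1 i = (z₁ i : ℝ) / Real.sqrt p := by
      intro i; rw [eq_div_iff hsp.ne', mul_comm]; exact hz₁ i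
    have hw2 : ∀ i, w.2 i = (z₂ i : ℝ) / Real.sqrt p := by
      intro i; rw [eq_div_iff hsp.ne', mul_comm]; exact hz₂ i
    set c' : (Fin n → ZMod p) × (Fin n → ZMod p) :=
      ((fun i => (z₁ i : ZMod p)), (fun i => (z₂ i : ZMod p))) with hc'def
    have hc'C : c' ∈ C := by
      rw [hC]
      intro c hc
      have hvmem : ((fun i => (((c.1 i).val : ℝ) + p * (0 : Fin n → ℤ) i) / Real.sqrt p),
          (fun i => (((c.2 i).val : ℝ) + p * (0 : Fin n → ℤ) i) / Real.sqrt p)) ∈ Λ :=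
        ⟨c, hc, 0, 0, rfl⟩
      obtain ⟨m, hm⟩ := hw _ hvmem
      have hform : lorentzPair
          ((fun i => (((c.1 i).val : ℝ) + p * (0 : Fin n → ℤ) i) / Real.sqrt p),
           (fun i => (((c.2 i).val : ℝ) + p * (0 : Fin n → ℤ) i) / Real.sqrt p)) w
          = ((∑ i, (((c.1 i).val : ℤ) * z₂ i + ((c.2 i).val : ℤ) * z₁ i) : ℤ) : ℝ) / p := by
        have hk := key (fun i => ((c.1 i).val : ℤ)) (fun i => ((c.2 i).val : ℤ)) z₁ z₂
        rw [← hk]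
        unfold lorentzPair
        apply Finset.sum_congr rfl
        intro i _
        rw [hw1 i, hw2 i]
        simp only [Pi.zero_apply, Int.cast_zero, mul_zero, add_zero]
        push_cast
        ring
      rw [hform, div_eq_iff hpz] at hm
      have hS : (∑ i, (((c.1 i).val : ℤ) * z₂ i + ((c.2 i).val : ℤ) * z₁ i)) = m * p := by
        exact_mod_cast hm
      have h0 : ((∑ i, (((c.1 i).val : ℤ) * z₂ i + ((c.2 i).val : ℤ) * z₁ i) : ℤ) : ZMod p)
          = 0 := by
        rw [hS]; push_cast; simp
      push_cast at h0
      simp only [ZMod.natCast_val, ZMod.cast_id] at h0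
      exact h0
    have hk₁ : ∀ i, ∃ k : ℤ, (z₁ i : ℤ) = (((z₁ i : ZMod p)).val : ℤ) + p * k := by
      intro i
      have hd : (p:ℤ) ∣ z₁ i - (((z₁ i : ZMod p)).val : ℤ) := by
        apply (ZMod.intCast_zmod_eq_zero_iff_dvd _ _).mp
        push_cast
        simp [ZMod.natCast_val, ZMod.cast_id, ZMod.intCast_cast]
      obtain ⟨k, hk⟩ := hd
      exact ⟨k, by linarith⟩
    have hk₂ : ∀ i, ∃ k : ℤ, (z₂ i : ℤ) = (((z₂ i : ZMod p)).val : ℤ) + p * k := by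
      intro i
      have hd : (p:ℤ) ∣ z₂ i - (((z₂ i : ZMod p)).val : ℤ) := by
        apply (ZMod.intCast_zmod_eq_zero_iff_dvd _ _).mp
        push_cast
        simp [ZMod.natCast_val, ZMod.cast_id, ZMod.intCast_cast]
      obtain ⟨k, hk⟩ := hd
      exact ⟨k, by linarith⟩
    choose k₁ hk1 using hk₁
    choose k₂ hk2 using hk₂
    refine ⟨c', hc'C, k₁, k₂, ?_⟩
    refine Prod.ext (funext fun i => ?_) (funext fun i => ?_)
    · rw [hw1 i]
      congr 1
      exact_mod_cast hk1 i
    · rw [hw2 i]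
      congr 1
      exact_mod_cast hk2 i
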